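/- Let P(ξ) be the minimum over convex-combination weights γ ≥ 0 summing to 1 with Σ γ_t^i ξ_t^i = ξ of Σ γ_t^i J^i(ξ_t^i), where J^i(ξ_t^i) = Σ_{k=t}^{T^i−1} h(u_k^i, y_k^i) is the cost-to-go along trajectory i (with J^i(ξ_{T^i}^i) = 0). Then for any ξ in the convex hull of trajectory states, the successor ξ⁺ = Ãξ + B̃ū under the convex-combination input ū = Σ γ*_t^i u_t^i (γ* a minimizer) satisfies P(ξ⁺) ≤ P(ξ) − h(ū, ȳ), where ȳ = C̃ξ + D̃ū and h is convex (here h(u,y) = ‖u−u^F‖²_R + ‖y−y^F‖²_Q with R ≻ 0, Q ⪰ 0). -/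

import Mathlib

open Matrix

lemma quad_convexOn {k : ℕ} {M : Matrix (Fin k) (Fin k) ℝ} (hM : M.PosSemidef) :
    ConvexOn ℝ Set.univ (fun x : Fin k → ℝ => x ⬝ᵥ M.mulVec x) := by
  refine ⟨convex_univ, fun x _ y _ a b ha hb hab => ?_⟩
  have key : 0 ≤ (x - y) ⬝ᵥ M.mulVec (x - y) := by simpa using hM.dotProduct_mulVec_nonneg (x - y)
  have expand2 : (x - y) ⬝ᵥ M.mulVec (x - y)
      = x ⬝ᵥ M.mulVec x - x ⬝ᵥ M.mulVec y - y ⬝ᵥ M.mulVec x + y ⬝ᵥ M.mulVec y := by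
    simp [Matrix.mulVec_sub, dotProduct_sub, sub_dotProduct]; ring
  have key2 : 0 ≤ a * b * (x ⬝ᵥ M.mulVec x - x ⬝ᵥ M.mulVec y - y ⬝ᵥ M.mulVec x + y ⬝ᵥ M.mulVec y) :=
    mul_nonneg (mul_nonneg ha hb) (expand2 ▸ key)
  have expand : (a • x + b • y) ⬝ᵥ M.mulVec (a • x + b • y)
      = a^2 * (x ⬝ᵥ M.mulVec x) + a*b*(x ⬝ᵥ M.mulVec y) + a*b*(y ⬝ᵥ M.mulVec x)
        + b^2 * (y ⬝ᵥ M.mulVec y) := by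
    simp [Matrix.mulVec_add, Matrix.mulVec_smul, dotProduct_add, add_dotProduct,
      smul_dotProduct, dotProduct_smul, smul_eq_mul]
    ring
  have hb' : b = 1 - a := by linarith
  subst hb'
  simp only [smul_eq_mul]
  rw [expand]
  nlinarith [key2]

lemma shift_sum {V : Type*} [AddCommMonoid V] [Module ℝ V] (T : ℕ) (w : ℕ → ℝ) (g : ℕ → V) :
    ∑ t ∈ Finset.range (T + 1),
        (∑ s ∈ Finset.range (T + 1), if min (s+1) T = t then w s else 0) • g t
      = ∑ s ∈ Finset.range (T + 1), w s • g (min (s+1) T) := by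
  simp_rw [Finset.sum_smul, ite_smul, zero_smul]
  rw [Finset.sum_comm]
  refine Finset.sum_congr rfl fun s hs => ?_
  rw [Finset.sum_ite_eq (Finset.range (T+1)) (min (s+1) T) (fun t => w s • g t),
    if_pos (Finset.mem_range.2 (Nat.lt_succ_of_le (min_le_right _ _)))]

open Matrix

/- STATEMENT 1: Terminal-cost decrease along the convex safe set: with
P(ξ) the minimal convex-combination cost-to-go representing ξ, and γ* a
minimizer attaining P(ξ), the successor ξ⁺ = Ãξ + B̃ū under the
convex-combination input ū satisfies P(ξ⁺) ≤ P(ξ) − h(ū, ȳ), where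
ȳ = C̃ξ + D̃ū and h(u,y) = ‖u−u^F‖²_R + ‖y−y^F‖²_Q with R ≻ 0, Q ⪰ 0. -/
theorem terminal_cost_decrease
    {n m p : ℕ} {ι : Type*} [Fintype ι]
    (A : (Fin n → ℝ) →ₗ[ℝ] (Fin n → ℝ))
    (B : (Fin m → ℝ) →ₗ[ℝ] (Fin n → ℝ))
    (C : (Fin n → ℝ) →ₗ[ℝ] (Fin p → ℝ))
    (D : (Fin m → ℝ) →ₗ[ℝ] (Fin p → ℝ))
    (R : Matrix (Fin m) (Fin m) ℝ) (Q : Matrix (Fin p) (Fin p) ℝ)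
    (hR : R.PosDef) (hQ : Q.PosSemidef)
    (uF : Fin m → ℝ) (yF : Fin p → ℝ) (ξF : Fin n → ℝ)
    -- the stage cost
    (h : (Fin m → ℝ) → (Fin p → ℝ) → ℝ)
    (hdef : ∀ u y, h u y = (u - uF) ⬝ᵥ R.mulVec (u - uF)
                          + (y - yF) ⬝ᵥ Q.mulVec (y - yF))
    -- trajectories
    (T : ι → ℕ)
    (ξ : ι → ℕ → (Fin n → ℝ)) (u : ι → ℕ → (Fin m → ℝ))
    (y : ι → ℕ → (Fin p → ℝ))
    (hdyn : ∀ i, ∀ t < T i, ξ i (t + 1) = A (ξ i t) + B (u i t))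
    (hout : ∀ i, ∀ t < T i, y i t = C (ξ i t) + D (u i t))
    (hterm : ∀ i, ξ i (T i) = ξF)
    (hequil : ξF = A ξF + B uF) (hyF : yF = C ξF + D uF)
    (huF : ∀ i, u i (T i) = uF)
    -- cost-to-go along each trajectory
    (J : ι → ℕ → ℝ)
    (hJ : ∀ i, ∀ t ≤ T i, J i t = ∑ k ∈ Finset.Ico t (T i), h (u i k) (y i k))
    -- the value function P of the linear program
    (P : (Fin n → ℝ) → ℝ)
    (hP : ∀ x, P x = sInf {c : ℝ | ∃ γ : ι → ℕ → ℝ,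
        (∀ i t, 0 ≤ γ i t) ∧
        (∑ i, ∑ t ∈ Finset.range (T i + 1), γ i t = 1) ∧
        (∑ i, ∑ t ∈ Finset.range (T i + 1), γ i t • ξ i t = x) ∧
        c = ∑ i, ∑ t ∈ Finset.range (T i + 1), γ i t * J i t})
    -- γ* is a minimizer for the point ξbar
    (γs : ι → ℕ → ℝ) (ξbar : Fin n → ℝ)
    (hγnn : ∀ i t, 0 ≤ γs i t)
    (hγsum : ∑ i, ∑ t ∈ Finset.range (T i + 1), γs i t = 1)
    (hγrep : ∑ i, ∑ t ∈ Finset.range (T i + 1), γs i t • ξ i t = ξbar)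
    (hopt : P ξbar = ∑ i, ∑ t ∈ Finset.range (T i + 1), γs i t * J i t)
    (ubar : Fin m → ℝ) (ybar : Fin p → ℝ)
    (hubar : ubar = ∑ i, ∑ t ∈ Finset.range (T i + 1), γs i t • u i t)
    (hybar : ybar = C ξbar + D ubar) :
    P (A ξbar + B ubar) ≤ P ξbar - h ubar ybar := by
  -- abbreviations
  classical
  set c : ι → ℕ → ℝ := fun i s => h (u i s) (C (ξ i s) + D (u i s)) with hc_def
  -- nonnegativity of the stage cost
  have hh0 : ∀ (v : Fin m → ℝ) (w : Fin p → ℝ), 0 ≤ h v w := by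
    intro v w
    rw [hdef]
    have h1 : 0 ≤ (v - uF) ⬝ᵥ R.mulVec (v - uF) := by
      simpa using hR.posSemidef.dotProduct_mulVec_nonneg (v - uF)
    have h2 : 0 ≤ (w - yF) ⬝ᵥ Q.mulVec (w - yF) := by
      simpa using hQ.dotProduct_mulVec_nonneg (w - yF)
    linarith
  have hterm0 : h uF yF = 0 := by rw [hdef]; simp
  -- J is nonnegative on the relevant range
  have hJ0 : ∀ i, ∀ t ∈ Finset.range (T i + 1), 0 ≤ J i t := by
    intro i t ht
    rw [hJ i t (Nat.lt_succ_iff.1 (Finset.mem_range.1 ht))]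
    exact Finset.sum_nonneg fun k _ => hh0 _ _
  -- the feasible-cost set is bounded below by 0
  have hbdd : ∀ x, BddBelow {c : ℝ | ∃ γ : ι → ℕ → ℝ,
      (∀ i t, 0 ≤ γ i t) ∧
      (∑ i, ∑ t ∈ Finset.range (T i + 1), γ i t = 1) ∧
      (∑ i, ∑ t ∈ Finset.range (T i + 1), γ i t • ξ i t = x) ∧
      c = ∑ i, ∑ t ∈ Finset.range (T i + 1), γ i t * J i t} := by
    intro x
    refine ⟨0, fun cc hcc => ?_⟩
    obtain ⟨γ, hγ0, -, -, hcc⟩ := hcc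
    rw [hcc]
    exact Finset.sum_nonneg fun i _ => Finset.sum_nonneg fun t ht =>
      mul_nonneg (hγ0 i t) (hJ0 i t ht)
  -- the shifted weights
  set γ' : ι → ℕ → ℝ := fun i t =>
      ∑ s ∈ Finset.range (T i + 1), if min (s+1) (T i) = t then γs i s else 0 with hγ'_def
  have hγ'0 : ∀ i t, 0 ≤ γ' i t := fun i t =>
    Finset.sum_nonneg fun s _ => by split <;> simp [hγnn]
  -- sum of shifted weights
  have hw : ∀ i, ∑ t ∈ Finset.range (T i + 1), γ' i t
      = ∑ s ∈ Finset.range (T i + 1), γs i s := by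
    intro i
    have := shift_sum (T i) (γs i) (fun _ => (1:ℝ))
    simpa [smul_eq_mul] using this
  -- shifted states
  have hstate : ∀ i, ∀ s ∈ Finset.range (T i + 1),
      ξ i (min (s+1) (T i)) = A (ξ i s) + B (u i s) := by
    intro i s hs
    rcases lt_or_eq_of_le (Nat.lt_succ_iff.1 (Finset.mem_range.1 hs)) with hlt | heq
    · rw [min_eq_left (Nat.succ_le_of_lt hlt)]
      exact hdyn i s hlt
    · subst heq
      rw [min_eq_right (Nat.le_succ _), hterm i, huF i, ← hterm i, ← huF i, hterm i, huF i]
      exact hequil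
  have hx : ∀ i, ∑ t ∈ Finset.range (T i + 1), γ' i t • ξ i t
      = ∑ s ∈ Finset.range (T i + 1), γs i s • (A (ξ i s) + B (u i s)) := by
    intro i
    rw [hγ'_def]
    rw [shift_sum (T i) (γs i) (ξ i)]
    exact Finset.sum_congr rfl fun s hs => by rw [hstate i s hs]
  have hxtot : ∑ i, ∑ t ∈ Finset.range (T i + 1), γ' i t • ξ i t = A ξbar + B ubar := by
    rw [Finset.sum_congr rfl fun i _ => hx i]
    simp only [smul_add, Finset.sum_add_distrib, ← _root_.map_smul, ← _root_.map_sum]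
    rw [hγrep, ← hubar]
  -- cost of shifted weights
  have hJshift : ∀ i, ∀ s ∈ Finset.range (T i + 1),
      J i (min (s+1) (T i)) = J i s - c i s := by
    intro i s hs
    rcases lt_or_eq_of_le (Nat.lt_succ_iff.1 (Finset.mem_range.1 hs)) with hlt | heq
    · rw [min_eq_left (Nat.succ_le_of_lt hlt)]
      rw [hJ i s (le_of_lt hlt), hJ i (s+1) (Nat.succ_le_of_lt hlt)]
      rw [Finset.sum_eq_sum_Ico_succ_bot hlt]
      rw [hc_def]
      simp only
      rw [← hout i s hlt]
      ring
    · subst heq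
      rw [min_eq_right (Nat.le_succ _), hJ i (T i) le_rfl]
      rw [hc_def]
      simp only
      rw [hterm i, huF i, ← hyF, hterm0, Finset.Ico_self, Finset.sum_empty]
      ring
  have hcost : ∀ i, ∑ t ∈ Finset.range (T i + 1), γ' i t * J i t
      = ∑ s ∈ Finset.range (T i + 1), γs i s * (J i s - c i s) := by
    intro i
    have := shift_sum (T i) (γs i) (J i)
    simp only [smul_eq_mul] at this
    rw [hγ'_def, this]
    exact Finset.sum_congr rfl fun s hs => by rw [hJshift i s hs]
  set S : ℝ := ∑ i, ∑ s ∈ Finset.range (T i + 1), γs i s * c i s with hS_def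
  have hcosttot : ∑ i, ∑ t ∈ Finset.range (T i + 1), γ' i t * J i t = P ξbar - S := by
    rw [Finset.sum_congr rfl fun i _ => hcost i]
    simp only [mul_sub, Finset.sum_sub_distrib]
    rw [← hopt, hS_def]
  -- step 1 : P (A ξbar + B ubar) ≤ P ξbar - S
  have hle1 : P (A ξbar + B ubar) ≤ P ξbar - S := by
    rw [hP]
    refine csInf_le (hbdd _) ?_
    exact ⟨γ', hγ'0, by rw [Finset.sum_congr rfl fun i _ => hw i]; exact hγsum,
      hxtot, hcosttot.symm⟩
  -- step 2 : h ubar ybar ≤ S  (Jensen)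
  have hle2 : h ubar ybar ≤ S := by
    set f : (Fin n → ℝ) × (Fin m → ℝ) → ℝ := fun q => h q.2 (C q.1 + D q.2) with hf_def
    have hconv : ConvexOn ℝ Set.univ f := by
      refine ⟨convex_univ, fun q _ r _ a b ha hb hab => ?_⟩
      have huF1 : a • uF + b • uF = uF := by rw [← add_smul, hab, one_smul]
      have hyF1 : a • yF + b • yF = yF := by rw [← add_smul, hab, one_smul]
      have e1 : (a • q + b • r).2 - uF = a • (q.2 - uF) + b • (r.2 - uF) := by
        have h' : a • (q.2 - uF) + b • (r.2 - uF)
            = a • q.2 + b • r.2 - (a • uF + b • uF) := by module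
        rw [h', huF1]
        simp only [Prod.snd_add, Prod.smul_snd]
      have e2 : C (a • q + b • r).1 + D (a • q + b • r).2 - yF
          = a • (C q.1 + D q.2 - yF) + b • (C r.1 + D r.2 - yF) := by
        have h' : a • (C q.1 + D q.2 - yF) + b • (C r.1 + D r.2 - yF)
            = a • C q.1 + b • C r.1 + (a • D q.2 + b • D r.2) - (a • yF + b • yF) := by
          module
        rw [h', hyF1]
        simp only [Prod.fst_add, Prod.snd_add, Prod.smul_fst, Prod.smul_snd,
          map_add, _root_.map_smul]
      have h1 := (quad_convexOn hR.posSemidef).2 (Set.mem_univ (q.2 - uF))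
        (Set.mem_univ (r.2 - uF)) ha hb hab
      have h2 := (quad_convexOn hQ).2 (Set.mem_univ (C q.1 + D q.2 - yF))
        (Set.mem_univ (C r.1 + D r.2 - yF)) ha hb hab
      simp only [smul_eq_mul] at h1 h2
      simp only [hf_def, hdef, e1, e2]
      calc (a • (q.2 - uF) + b • (r.2 - uF)) ⬝ᵥ R.mulVec (a • (q.2 - uF) + b • (r.2 - uF))
            + (a • (C q.1 + D q.2 - yF) + b • (C r.1 + D r.2 - yF)) ⬝ᵥ
              Q.mulVec (a • (C q.1 + D q.2 - yF) + b • (C r.1 + D r.2 - yF))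
          ≤ (a * ((q.2 - uF) ⬝ᵥ R.mulVec (q.2 - uF)) + b * ((r.2 - uF) ⬝ᵥ R.mulVec (r.2 - uF)))
            + (a * ((C q.1 + D q.2 - yF) ⬝ᵥ Q.mulVec (C q.1 + D q.2 - yF))
              + b * ((C r.1 + D r.2 - yF) ⬝ᵥ Q.mulVec (C r.1 + D r.2 - yF))) :=
            add_le_add h1 h2
        _ = _ := by simp only [smul_eq_mul]; ring
    -- apply Jensen over the sigma finset
    set t : Finset (Σ _ : ι, ℕ) := Finset.univ.sigma (fun i => Finset.range (T i + 1)) with ht_def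
    set w : (Σ _ : ι, ℕ) → ℝ := fun q => γs q.1 q.2 with hw_def
    set z : (Σ _ : ι, ℕ) → (Fin n → ℝ) × (Fin m → ℝ) := fun q => (ξ q.1 q.2, u q.1 q.2) with hz_def
    have hsum1 : ∑ q ∈ t, w q = 1 := by
      rw [ht_def, Finset.sum_sigma]
      exact hγsum
    have hjen := hconv.map_sum_le (t := t) (w := w) (p := z)
      (fun q _ => hγnn q.1 q.2) hsum1 (fun q _ => Set.mem_univ _)
    have hzsum : ∑ q ∈ t, w q • z q = (ξbar, ubar) := by
      rw [Prod.ext_iff]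
      constructor
      · rw [Prod.fst_sum]
        simp only [Prod.smul_fst]
        rw [ht_def, Finset.sum_sigma]
        exact hγrep
      · rw [Prod.snd_sum]
        simp only [Prod.smul_snd]
        rw [ht_def, Finset.sum_sigma]
        exact hubar.symm
    rw [hzsum] at hjen
    have hfz : ∑ q ∈ t, w q * f (z q) = S := by
      rw [ht_def, Finset.sum_sigma]
    simp only [smul_eq_mul] at hjen
    rw [hfz] at hjen
    have : f (ξbar, ubar) = h ubar ybar := by rw [hf_def]; simp only; rw [← hybar]
    rw [this] at hjen
    exact hjen
  linarith
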